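/- Let d ≥ n ≥ k ≥ 1, let Φ_n := |Φ_n⟩⟨Φ_n| be a Slater determinant state of n fermions in ℂ^d, and let C_{k→n} and P_{n→k} be the antisymmetric cloning machine and antisymmetrized partial trace, respectively. Then D(Φ_n ‖ (C_{k→n}∘P_{n→k})(Φ_n)) ≤ log C(d−k, d−n), and moreover log C(d−k, d−n) = −log( C(d,k) / (C(n,k)·C(d,n)) ). -/

import Mathlib

open scoped BigOperators Matrix Kronecker ComplexOrder
open Matrix

noncomputable section

variable {ι : Type*} [Fintype ι] [DecidableEq ι]

/-- Apply a real-scalar function to a Hermitian matrix via the spectral decomposition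
(junk value `0` on non-Hermitian matrices). -/
def hermFun (f : ℝ → ℂ) (A : Matrix ι ι ℂ) : Matrix ι ι ℂ :=
  if hA : A.IsHermitian then
    (hA.eigenvectorUnitary : Matrix ι ι ℂ) * Matrix.diagonal (fun i => f (hA.eigenvalues i)) *
      (star (hA.eigenvectorUnitary : Matrix ι ι ℂ))
  else 0

/-- Matrix logarithm (on the support; natural logarithm). -/
def matLog (A : Matrix ι ι ℂ) : Matrix ι ι ℂ := hermFun (fun x => (Real.log x : ℂ)) A

/-- Matrix square root of a Hermitian (e.g. positive semidefinite) matrix. -/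
def matSqrt (A : Matrix ι ι ℂ) : Matrix ι ι ℂ := hermFun (fun x => (Real.sqrt x : ℂ)) A

/-- Complex matrix power with the Moore–Penrose convention (inverse powers taken on the support). -/
def matCPow (A : Matrix ι ι ℂ) (z : ℂ) : Matrix ι ι ℂ :=
  hermFun (fun x => if x = 0 then 0 else (x : ℂ) ^ z) A

/-- A state (density operator). -/
def IsState (ρ : Matrix ι ι ℂ) : Prop := ρ.PosSemidef ∧ ρ.trace = 1

/-- Quantum relative entropy `D(ρ‖σ) = tr[ρ (log ρ - log σ)]`. -/
def relEnt (ρ σ : Matrix ι ι ℂ) : ℝ := ((ρ * (matLog ρ - matLog σ)).trace).re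

/-- von Neumann entropy `H(ρ) = -tr[ρ log ρ]`. -/
def vnEntropy (ρ : Matrix ι ι ℂ) : ℝ := -((ρ * matLog ρ).trace).re

/-- Trace norm `‖X‖₁ = tr √(X† X)`. -/
def traceNorm (X : Matrix ι ι ℂ) : ℝ := ((matSqrt (Xᴴ * X)).trace).re

/-- Fidelity `F(ρ,σ) = ‖√ρ √σ‖₁²`. -/
def fidelity (ρ σ : Matrix ι ι ℂ) : ℝ := (traceNorm (matSqrt ρ * matSqrt σ)) ^ 2

variable {A B : Type*} [Fintype A] [DecidableEq A] [Fintype B] [DecidableEq B]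

/-- The extension `Λ ⊗ id_m` of a map on matrices. -/
def extendChan (Λ : Matrix A A ℂ →ₗ[ℂ] Matrix B B ℂ) {m : Type*} [Fintype m]
    (M : Matrix (A × m) (A × m) ℂ) : Matrix (B × m) (B × m) ℂ :=
  fun p q => Λ (fun a a' => M (a, p.2) (a', q.2)) p.1 q.1

/-- A quantum channel: a completely positive trace-preserving linear map. -/
structure IsQChannel (Λ : Matrix A A ℂ →ₗ[ℂ] Matrix B B ℂ) : Prop where
  tp : ∀ M, (Λ M).trace = M.trace
  cp : ∀ (m : ℕ) (M : Matrix (A × Fin m) (A × Fin m) ℂ), M.PosSemidef →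
    (extendChan Λ M).PosSemidef

/-- The marginal of a state of `n` systems on the `j`-th system. -/
def marginal {n : ℕ} (ρ : Matrix (Fin n → ι) (Fin n → ι) ℂ) (j : Fin n) :
    Matrix ι ι ℂ :=
  fun a b => ∑ f : {i : Fin n // i ≠ j} → ι,
      ρ (fun i => if h : i = j then a else f ⟨i, h⟩)
        (fun i => if h : i = j then b else f ⟨i, h⟩)

/-- `n`-fold tensor power of a matrix. -/
def tpow (σ : Matrix ι ι ℂ) (n : ℕ) : Matrix (Fin n → ι) (Fin n → ι) ℂ :=
  fun f g => ∏ i, σ (f i) (g i)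

/-- Partial trace over the last `n - k` tensor factors. -/
def ptraceLast {n k : ℕ} (h : k ≤ n) (ρ : Matrix (Fin n → ι) (Fin n → ι) ℂ) :
    Matrix (Fin k → ι) (Fin k → ι) ℂ :=
  fun a b => ∑ z : Fin (n - k) → ι,
    ρ (fun i => if h' : (i : ℕ) < k then a ⟨i, h'⟩ else z ⟨(i : ℕ) - k, by have := i.isLt; omega⟩)
      (fun i => if h' : (i : ℕ) < k then b ⟨i, h'⟩ else z ⟨(i : ℕ) - k, by have := i.isLt; omega⟩)

/-- Permutation matrix acting on `(ℂ^d)^{⊗ n}`. -/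
def permMat (d n : ℕ) (π : Equiv.Perm (Fin n)) :
    Matrix (Fin n → Fin d) (Fin n → Fin d) ℂ :=
  fun f g => if g = f ∘ π then 1 else 0

/-- Orthogonal projection onto the symmetric subspace of `(ℂ^d)^{⊗ n}`. -/
def symProj (d n : ℕ) : Matrix (Fin n → Fin d) (Fin n → Fin d) ℂ :=
  ((n.factorial : ℂ))⁻¹ • ∑ π : Equiv.Perm (Fin n), permMat d n π

/-- Dimension `d[n] = C(d+n-1, n)` of the symmetric subspace. -/
def dsym (d n : ℕ) : ℕ := (d + n - 1).choose n

/-- Maximally mixed state on the symmetric subspace. -/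
def piSym (d n : ℕ) : Matrix (Fin n → Fin d) (Fin n → Fin d) ℂ :=
  ((dsym d n : ℂ))⁻¹ • symProj d n

/-- Tensoring a matrix on the first `k` factors with the identity on the last `n-k` factors. -/
def extendId {d k n : ℕ} (h : k ≤ n) (M : Matrix (Fin k → Fin d) (Fin k → Fin d) ℂ) :
    Matrix (Fin n → Fin d) (Fin n → Fin d) ℂ :=
  fun f g => (if ∀ i : Fin n, k ≤ (i : ℕ) → f i = g i then 1 else 0) *
    M (fun i => f (Fin.castLE h i)) (fun i => g (Fin.castLE h i))

/-- The universal quantum cloning machine `C_{k→n}`. -/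
def uqcm (d : ℕ) {k n : ℕ} (h : k ≤ n) (ω : Matrix (Fin k → Fin d) (Fin k → Fin d) ℂ) :
    Matrix (Fin n → Fin d) (Fin n → Fin d) ℂ :=
  (((dsym d k : ℂ)) / ((dsym d n : ℂ))) •
    (symProj d n * extendId h (symProj d k * ω * symProj d k) * symProj d n)

/-- The symmetrized partial trace channel `P_{n→k}`. -/
def symPTrace (d : ℕ) {k n : ℕ} (h : k ≤ n) (ω : Matrix (Fin n → Fin d) (Fin n → Fin d) ℂ) :
    Matrix (Fin k → Fin d) (Fin k → Fin d) ℂ :=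
  symProj d k * ptraceLast h (symProj d n * ω * symProj d n) * symProj d k

/-- Orthogonal projection onto the antisymmetric subspace of `(ℂ^d)^{⊗ n}`. -/
def antiProj (d n : ℕ) : Matrix (Fin n → Fin d) (Fin n → Fin d) ℂ :=
  ((n.factorial : ℂ))⁻¹ • ∑ π : Equiv.Perm (Fin n), ((Equiv.Perm.sign π : ℤ) : ℂ) • permMat d n π

/-- Maximally mixed state on the antisymmetric subspace. -/
def piAnti (d n : ℕ) : Matrix (Fin n → Fin d) (Fin n → Fin d) ℂ :=
  ((d.choose n : ℂ))⁻¹ • antiProj d n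

/-- The antisymmetric cloning machine. -/
def antiClone (d : ℕ) {k n : ℕ} (h : k ≤ n) (ω : Matrix (Fin k → Fin d) (Fin k → Fin d) ℂ) :
    Matrix (Fin n → Fin d) (Fin n → Fin d) ℂ :=
  (((d.choose k : ℂ)) / ((d.choose n : ℂ))) •
    (antiProj d n * extendId h (antiProj d k * ω * antiProj d k) * antiProj d n)

/-- The antisymmetrized partial trace. -/
def antiPTrace (d : ℕ) {k n : ℕ} (h : k ≤ n) (ω : Matrix (Fin n → Fin d) (Fin n → Fin d) ℂ) :
    Matrix (Fin k → Fin d) (Fin k → Fin d) ℂ :=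
  antiProj d k * ptraceLast h (antiProj d n * ω * antiProj d n) * antiProj d k

/-- Rank-one projection (outer product) `|v⟩⟨v|`. -/
def outer {α : Type*} (v : α → ℂ) : Matrix α α ℂ :=
  fun x y => v x * (starRingEnd ℂ) (v y)

/-- Slater determinant vector `φ₁ ∧ ⋯ ∧ φ_k`. -/
def slater {d k : ℕ} (w : Fin k → (Fin d → ℂ)) : (Fin k → Fin d) → ℂ :=
  fun f => ((Real.sqrt k.factorial : ℂ))⁻¹ *
    ∑ π : Equiv.Perm (Fin k), ((Equiv.Perm.sign π : ℤ) : ℂ) * ∏ i, w (π i) (f i)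

/-- Partial trace over the second tensor factor. -/
def trB {ιA ιB : Type*} [Fintype ιB] (ρ : Matrix (ιA × ιB) (ιA × ιB) ℂ) : Matrix ιA ιA ℂ :=
  fun a a' => ∑ b, ρ (a, b) (a', b)

/-- Partial trace over the first tensor factor. -/
def trA {ιA ιB : Type*} [Fintype ιA] (ρ : Matrix (ιA × ιB) (ιA × ιB) ℂ) : Matrix ιB ιB ℂ :=
  fun b b' => ∑ a, ρ (a, b) (a, b')

/-- The probability density `β(t) = (π/2)(1 + cosh(π t))⁻¹`. -/
def betaDens (t : ℝ) : ℝ := (Real.pi / 2) * (1 + Real.cosh (Real.pi * t))⁻¹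

/-- Rotated Petz recovery map `R^t_{A,X}`, mapping operators on `B` to operators on `A ⊗ B`. -/
def petzA {ιA ιB : Type*} [Fintype ιA] [DecidableEq ιA] [Fintype ιB] [DecidableEq ιB]
    (t : ℝ) (X : Matrix (ιA × ιB) (ιA × ιB) ℂ) (Y : Matrix ιB ιB ℂ) :
    Matrix (ιA × ιB) (ιA × ιB) ℂ :=
  matCPow X ((1 + t * Complex.I) / 2) *
    ((1 : Matrix ιA ιA ℂ) ⊗ₖ
      (matCPow (trA X) (-(1 + t * Complex.I) / 2) * Y * matCPow (trA X) (-(1 - t * Complex.I) / 2))) *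
    matCPow X ((1 - t * Complex.I) / 2)

/-- Rotated Petz recovery map `R^t_{B,X}`, mapping operators on `A` to operators on `A ⊗ B`. -/
def petzB {ιA ιB : Type*} [Fintype ιA] [DecidableEq ιA] [Fintype ιB] [DecidableEq ιB]
    (t : ℝ) (X : Matrix (ιA × ιB) (ιA × ιB) ℂ) (Y : Matrix ιA ιA ℂ) :
    Matrix (ιA × ιB) (ιA × ιB) ℂ :=
  matCPow X ((1 + t * Complex.I) / 2) *
    ((matCPow (trB X) (-(1 + t * Complex.I) / 2) * Y * matCPow (trB X) (-(1 - t * Complex.I) / 2)) ⊗ₖ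
      (1 : Matrix ιB ιB ℂ)) *
    matCPow X ((1 - t * Complex.I) / 2)

/-- Cloning map between two general subspaces, given by their orthogonal projections. -/
def genClone {d k n : ℕ} (h : k ≤ n) (dX dY : ℕ)
    (PX : Matrix (Fin n → Fin d) (Fin n → Fin d) ℂ)
    (PY : Matrix (Fin k → Fin d) (Fin k → Fin d) ℂ)
    (ω : Matrix (Fin k → Fin d) (Fin k → Fin d) ℂ) :
    Matrix (Fin n → Fin d) (Fin n → Fin d) ℂ :=
  (((dY : ℂ)) / ((dX : ℂ))) • (PX * extendId h (PY * ω * PY) * PX)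

/-- Partial trace channel between two general subspaces. -/
def genPTrace {d k n : ℕ} (h : k ≤ n)
    (PX : Matrix (Fin n → Fin d) (Fin n → Fin d) ℂ)
    (PY : Matrix (Fin k → Fin d) (Fin k → Fin d) ℂ)
    (ω : Matrix (Fin n → Fin d) (Fin n → Fin d) ℂ) :
    Matrix (Fin k → Fin d) (Fin k → Fin d) ℂ :=
  PY * ptraceLast h (PX * ω * PX) * PY

end
noncomputable section Aux
open Equiv

namespace ACAux

variable {d k m n : ℕ}

/-- Sign of a permutation as a complex number. -/
def sgnC {m : ℕ} (π : Equiv.Perm (Fin m)) : ℂ := ((Equiv.Perm.sign π : ℤ) : ℂ)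

lemma sgnC_cases (π : Perm (Fin m)) : sgnC π = 1 ∨ sgnC π = -1 := by
  rcases Int.units_eq_one_or (Equiv.Perm.sign π) with h | h <;> simp [sgnC, h]

lemma sgnC_mul (π τ : Perm (Fin m)) : sgnC (π * τ) = sgnC π * sgnC τ := by
  simp [sgnC, Equiv.Perm.sign_mul, Units.val_mul]

lemma sgnC_inv (π : Perm (Fin m)) : sgnC π⁻¹ = sgnC π := by
  simp [sgnC, Equiv.Perm.sign_inv]

lemma sgnC_mul_self (π : Perm (Fin m)) : sgnC π * sgnC π = 1 := by
  rcases sgnC_cases π with h | h <;> rw [h] <;> ring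

lemma conj_sgnC (π : Perm (Fin m)) : (starRingEnd ℂ) (sgnC π) = sgnC π := by
  rcases sgnC_cases π with h | h <;> rw [h] <;> simp

/-- The antisymmetrizing permutation sum. -/
def aSum (φ : Fin m → Fin d → ℂ) (g : Fin m → Fin d) : ℂ :=
  ∑ π : Perm (Fin m), sgnC π * ∏ i, φ (π i) (g i)

lemma slater_eq (φ : Fin m → Fin d → ℂ) (g : Fin m → Fin d) :
    slater φ g = ((Real.sqrt m.factorial : ℂ))⁻¹ * aSum φ g := rfl

lemma aSum_comp (φ : Fin m → Fin d → ℂ) (π : Perm (Fin m)) (g : Fin m → Fin d) :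
    aSum φ (g ∘ π) = sgnC π * aSum φ g := by
  unfold aSum
  rw [Finset.mul_sum]
  refine Fintype.sum_equiv (Equiv.mulRight π⁻¹) _ _ ?_
  intro σ
  have h1 : (∏ i, φ (σ i) ((g ∘ π) i)) = ∏ i, φ ((σ * π⁻¹) i) (g i) := by
    calc (∏ i, φ (σ i) ((g ∘ π) i)) = ∏ i, φ ((σ * π⁻¹) (π i)) (g (π i)) := by
          refine Finset.prod_congr rfl fun i _ => ?_
          simp [Equiv.Perm.mul_apply, Function.comp]
      _ = ∏ i, φ ((σ * π⁻¹) i) (g i) := Equiv.prod_comp π fun i => φ ((σ * π⁻¹) i) (g i)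
  rw [h1]
  have h2 : sgnC σ = sgnC π * sgnC (σ * π⁻¹) := by
    rw [sgnC_mul, sgnC_inv]
    rcases sgnC_cases π with h | h <;> rw [h] <;> ring
  rw [h2, Equiv.coe_mulRight, mul_assoc]

lemma slater_perm (φ : Fin m → Fin d → ℂ) (π : Perm (Fin m)) (g : Fin m → Fin d) :
    slater φ (g ∘ π) = sgnC π * slater φ g := by
  rw [slater_eq, slater_eq, aSum_comp]
  ring

lemma comp_perm_eq_iff (π : Perm (Fin m)) (a b : Fin m → Fin d) :
    b = a ∘ π ↔ a = b ∘ ⇑(π⁻¹) := by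
  constructor <;> rintro rfl <;> funext i <;> simp

/-- `antiProj` entries. -/
lemma antiProj_apply (a b : Fin m → Fin d) :
    antiProj d m a b
      = ((m.factorial : ℂ))⁻¹ * ∑ π : Perm (Fin m), sgnC π * (if b = a ∘ π then 1 else 0) := by
  simp [antiProj, permMat, Matrix.sum_apply, Matrix.smul_apply, smul_eq_mul, sgnC]

lemma antiProj_mul_left (N : Matrix (Fin m → Fin d) (Fin m → Fin d) ℂ)
    (hN : ∀ (π : Perm (Fin m)) a b, N (a ∘ π) b = sgnC π * N a b) :
    antiProj d m * N = N := by
  ext a b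
  rw [Matrix.mul_apply]
  calc ∑ c, antiProj d m a c * N c b
      = ∑ c, ∑ π : Perm (Fin m),
          ((m.factorial : ℂ))⁻¹ * (sgnC π * ((if c = a ∘ π then 1 else 0) * N c b)) := by
        refine Finset.sum_congr rfl fun c _ => ?_
        rw [antiProj_apply, mul_assoc, Finset.sum_mul, Finset.mul_sum]
        exact Finset.sum_congr rfl fun π _ => by ring
    _ = ∑ π : Perm (Fin m), ∑ c,
          ((m.factorial : ℂ))⁻¹ * (sgnC π * ((if c = a ∘ π then 1 else 0) * N c b)) :=
        Finset.sum_comm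
    _ = ∑ π : Perm (Fin m), ((m.factorial : ℂ))⁻¹ * (sgnC π * N (a ∘ π) b) := by
        refine Finset.sum_congr rfl fun π _ => ?_
        rw [← Finset.mul_sum, ← Finset.mul_sum]
        congr 2
        rw [Finset.sum_congr rfl (fun c _ => by rw [ite_mul, one_mul, zero_mul]),
          Finset.sum_ite_eq' Finset.univ (a ∘ ⇑π) (fun c => N c b)]
        simp
    _ = ∑ π : Perm (Fin m), ((m.factorial : ℂ))⁻¹ * N a b := by
        refine Finset.sum_congr rfl fun π _ => ?_
        rw [hN π a b]
        linear_combination ((m.factorial : ℂ))⁻¹ * N a b * sgnC_mul_self π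
    _ = N a b := by
        rw [Finset.sum_const, Finset.card_univ, Fintype.card_perm, Fintype.card_fin, nsmul_eq_mul]
        field_simp

lemma antiProj_mul_right (N : Matrix (Fin m → Fin d) (Fin m → Fin d) ℂ)
    (hN : ∀ (π : Perm (Fin m)) a b, N a (b ∘ π) = sgnC π * N a b) :
    N * antiProj d m = N := by
  ext a b
  rw [Matrix.mul_apply]
  calc ∑ c, N a c * antiProj d m c b
      = ∑ c, ∑ π : Perm (Fin m),
          ((m.factorial : ℂ))⁻¹ * (sgnC π * ((if c = b ∘ ⇑(π⁻¹) then 1 else 0) * N a c)) := by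
        refine Finset.sum_congr rfl fun c _ => ?_
        rw [antiProj_apply, Finset.mul_sum, Finset.mul_sum]
        refine Finset.sum_congr rfl fun π _ => ?_
        rw [if_congr (comp_perm_eq_iff π c b) rfl rfl]
        ring
    _ = ∑ π : Perm (Fin m), ∑ c,
          ((m.factorial : ℂ))⁻¹ * (sgnC π * ((if c = b ∘ ⇑(π⁻¹) then 1 else 0) * N a c)) :=
        Finset.sum_comm
    _ = ∑ π : Perm (Fin m), ((m.factorial : ℂ))⁻¹ * (sgnC π * N a (b ∘ ⇑(π⁻¹))) := by
        refine Finset.sum_congr rfl fun π _ => ?_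
        rw [← Finset.mul_sum, ← Finset.mul_sum]
        congr 2
        rw [Finset.sum_congr rfl (fun c _ => by rw [ite_mul, one_mul, zero_mul]),
          Finset.sum_ite_eq' Finset.univ (b ∘ ⇑(π⁻¹)) (fun c => N a c)]
        simp
    _ = ∑ π : Perm (Fin m), ((m.factorial : ℂ))⁻¹ * N a b := by
        refine Finset.sum_congr rfl fun π _ => ?_
        rw [hN π⁻¹ a b, sgnC_inv]
        linear_combination ((m.factorial : ℂ))⁻¹ * N a b * sgnC_mul_self π
    _ = N a b := by
        rw [Finset.sum_const, Finset.card_univ, Fintype.card_perm, Fintype.card_fin, nsmul_eq_mul]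
        field_simp

lemma antiProj_mulVec (u : (Fin m → Fin d) → ℂ)
    (hu : ∀ (π : Perm (Fin m)) a, u (a ∘ π) = sgnC π * u a) :
    (antiProj d m) *ᵥ u = u := by
  funext a
  rw [Matrix.mulVec, dotProduct]
  calc ∑ c, antiProj d m a c * u c
      = ∑ c, ∑ π : Perm (Fin m),
          ((m.factorial : ℂ))⁻¹ * (sgnC π * ((if c = a ∘ π then 1 else 0) * u c)) := by
        refine Finset.sum_congr rfl fun c _ => ?_
        rw [antiProj_apply, mul_assoc, Finset.sum_mul, Finset.mul_sum]
        exact Finset.sum_congr rfl fun π _ => by ring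
    _ = ∑ π : Perm (Fin m), ∑ c,
          ((m.factorial : ℂ))⁻¹ * (sgnC π * ((if c = a ∘ π then 1 else 0) * u c)) :=
        Finset.sum_comm
    _ = ∑ π : Perm (Fin m), ((m.factorial : ℂ))⁻¹ * (sgnC π * u (a ∘ π)) := by
        refine Finset.sum_congr rfl fun π _ => ?_
        rw [← Finset.mul_sum, ← Finset.mul_sum]
        congr 2
        rw [Finset.sum_congr rfl (fun c _ => by rw [ite_mul, one_mul, zero_mul]),
          Finset.sum_ite_eq' Finset.univ (a ∘ ⇑π) u]
        simp
    _ = ∑ π : Perm (Fin m), ((m.factorial : ℂ))⁻¹ * u a := by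
        refine Finset.sum_congr rfl fun π _ => ?_
        rw [hu π a]
        linear_combination ((m.factorial : ℂ))⁻¹ * u a * sgnC_mul_self π
    _ = u a := by
        rw [Finset.sum_const, Finset.card_univ, Fintype.card_perm, Fintype.card_fin, nsmul_eq_mul]
        field_simp

end ACAux
end Aux
noncomputable section Aux2
open Equiv
namespace ACAux

variable {d k n : ℕ}

/-- Orthonormality collapses sums over basis tuples. -/
lemma orth_sum {m : ℕ} (φ : Fin n → Fin d → ℂ)
    (hφ : ∀ i j, (∑ a, (starRingEnd ℂ) (φ i a) * φ j a) = if i = j then 1 else 0)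
    (u w : Fin m → Fin n) :
    (∑ b : Fin m → Fin d, ∏ i, (starRingEnd ℂ) (φ (u i) (b i)) * φ (w i) (b i))
      = if (∀ i, u i = w i) then 1 else 0 := by
  classical
  rw [← Fintype.piFinset_univ,
    Finset.sum_prod_piFinset Finset.univ (fun i x => (starRingEnd ℂ) (φ (u i) x) * φ (w i) x)]
  rw [Finset.prod_congr rfl (fun i _ => hφ (u i) (w i)), Finset.prod_boole]
  simp

/-- The join of a `k`-tuple and an `(n-k)`-tuple, matching `ptraceLast`. -/
def jn (hkn : k ≤ n) (a : Fin k → Fin d) (z : Fin (n - k) → Fin d) : Fin n → Fin d :=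
  fun i => if h' : (i : ℕ) < k then a ⟨i, h'⟩ else z ⟨(i : ℕ) - k, by have := i.isLt; omega⟩

/-- Splitting `Fin n` into the first `k` and last `n - k` indices. -/
def es (hkn : k ≤ n) : Fin k ⊕ Fin (n - k) ≃ Fin n :=
  finSumFinEquiv.trans (finCongr (by omega))

lemma es_inl_coe (hkn : k ≤ n) (i : Fin k) : ((es hkn (Sum.inl i) : Fin n) : ℕ) = (i : ℕ) := by
  simp [es]

lemma es_inr_coe (hkn : k ≤ n) (j : Fin (n - k)) :
    ((es hkn (Sum.inr j) : Fin n) : ℕ) = k + (j : ℕ) := by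
  simp [es]

lemma es_inl_lt (hkn : k ≤ n) (i : Fin k) : ((es hkn (Sum.inl i) : Fin n) : ℕ) < k := by
  rw [es_inl_coe]; exact i.isLt

lemma es_inr_not_lt (hkn : k ≤ n) (j : Fin (n - k)) :
    ¬ ((es hkn (Sum.inr j) : Fin n) : ℕ) < k := by
  rw [es_inr_coe]; omega

lemma es_inl_castLE (hkn : k ≤ n) (i : Fin k) : es hkn (Sum.inl i) = Fin.castLE hkn i :=
  Fin.ext (by simp [es_inl_coe])

lemma jn_es_inl (hkn : k ≤ n) (a : Fin k → Fin d) (z : Fin (n - k) → Fin d) (i : Fin k) :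
    jn hkn a z (es hkn (Sum.inl i)) = a i := by
  have h : ((es hkn (Sum.inl i) : Fin n) : ℕ) < k := es_inl_lt hkn i
  simp only [jn]
  rw [dif_pos h]
  exact congrArg a (Fin.ext (es_inl_coe hkn i))

lemma jn_es_inr (hkn : k ≤ n) (a : Fin k → Fin d) (z : Fin (n - k) → Fin d) (j : Fin (n - k)) :
    jn hkn a z (es hkn (Sum.inr j)) = z j := by
  have h : ¬ ((es hkn (Sum.inr j) : Fin n) : ℕ) < k := es_inr_not_lt hkn j
  simp only [jn]
  rw [dif_neg h]
  refine congrArg z (Fin.ext ?_)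
  show ((es hkn (Sum.inr j) : Fin n) : ℕ) - k = (j : ℕ)
  rw [es_inr_coe]
  omega

lemma es_surj_lt (hkn : k ≤ n) (x : Fin n) (h : (x : ℕ) < k) :
    es hkn (Sum.inl ⟨(x : ℕ), h⟩) = x := Fin.ext (by rw [es_inl_coe])

lemma es_surj_ge (hkn : k ≤ n) (x : Fin n) (h : ¬ (x : ℕ) < k) :
    es hkn (Sum.inr ⟨(x : ℕ) - k, by have := x.isLt; omega⟩) = x := by
  refine Fin.ext ?_
  rw [es_inr_coe]
  show k + ((x : ℕ) - k) = (x : ℕ)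
  omega

/-- Splitting a product over `Fin n`. -/
lemma prod_split (hkn : k ≤ n) (F : Fin n → ℂ) :
    (∏ i, F i) = (∏ i : Fin k, F (es hkn (Sum.inl i))) *
      ∏ j : Fin (n - k), F (es hkn (Sum.inr j)) := by
  rw [← Equiv.prod_comp (es hkn) F, Fintype.prod_sum_type]

/-- The slater vector evaluated on a join. -/
lemma slater_jn (hkn : k ≤ n) (φ : Fin n → Fin d → ℂ) (a : Fin k → Fin d)
    (z : Fin (n - k) → Fin d) :
    slater φ (jn hkn a z) = ((Real.sqrt n.factorial : ℂ))⁻¹ *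
      ∑ π : Perm (Fin n), sgnC π *
        ((∏ i : Fin k, φ (π (es hkn (Sum.inl i))) (a i)) *
          ∏ j : Fin (n - k), φ (π (es hkn (Sum.inr j))) (z j)) := by
  rw [slater_eq]
  congr 1
  unfold aSum
  refine Finset.sum_congr rfl fun π _ => ?_
  congr 1
  rw [prod_split hkn (fun i => φ (π i) (jn hkn a z i))]
  congr 1
  · exact Finset.prod_congr rfl fun i _ => by rw [jn_es_inl]
  · exact Finset.prod_congr rfl fun j _ => by rw [jn_es_inr]

lemma conj_slater_jn (hkn : k ≤ n) (φ : Fin n → Fin d → ℂ) (a : Fin k → Fin d)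
    (z : Fin (n - k) → Fin d) :
    (starRingEnd ℂ) (slater φ (jn hkn a z)) = ((Real.sqrt n.factorial : ℂ))⁻¹ *
      ∑ π : Perm (Fin n), sgnC π *
        ((∏ i : Fin k, (starRingEnd ℂ) (φ (π (es hkn (Sum.inl i))) (a i))) *
          ∏ j : Fin (n - k), (starRingEnd ℂ) (φ (π (es hkn (Sum.inr j))) (z j))) := by
  rw [slater_jn hkn, _root_.map_mul, map_sum]
  congr 1
  · rw [map_inv₀]
    simp [Complex.conj_ofReal, Complex.ofReal_inv]
  · refine Finset.sum_congr rfl fun π _ => ?_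
    rw [_root_.map_mul, conj_sgnC, _root_.map_mul, map_prod, map_prod]

end ACAux
end Aux2
noncomputable section Aux3
open Equiv
namespace ACAux

variable {d k n : ℕ}

def ek (hkn : k ≤ n) : Fin k ≃ {i : Fin n // (i : ℕ) < k} where
  toFun i := ⟨⟨(i : ℕ), lt_of_lt_of_le i.isLt hkn⟩, i.isLt⟩
  invFun j := ⟨(j.1 : ℕ), j.2⟩
  left_inv i := rfl
  right_inv j := rfl

/-- Extension of a permutation of the first `k` indices to all `n` indices. -/
def embk (hkn : k ≤ n) (τ : Perm (Fin k)) : Perm (Fin n) := τ.extendDomain (ek hkn)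

lemma sgnC_embk (hkn : k ≤ n) (τ : Perm (Fin k)) : sgnC (embk hkn τ) = sgnC τ := by
  simp [sgnC, embk, Equiv.Perm.sign_extendDomain]

lemma embk_apply_lt (hkn : k ≤ n) (τ : Perm (Fin k)) (i : Fin n) (h : (i : ℕ) < k) :
    embk hkn τ i = ⟨(τ ⟨(i : ℕ), h⟩ : ℕ), lt_of_lt_of_le (τ ⟨(i : ℕ), h⟩).isLt hkn⟩ := by
  rw [embk, Equiv.Perm.extendDomain_apply_subtype τ (ek hkn) h]
  rfl

lemma embk_apply_ge (hkn : k ≤ n) (τ : Perm (Fin k)) (i : Fin n) (h : ¬ (i : ℕ) < k) :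
    embk hkn τ i = i :=
  Equiv.Perm.extendDomain_apply_not_subtype τ (ek hkn) h

lemma jn_embk (hkn : k ≤ n) (τ : Perm (Fin k)) (a : Fin k → Fin d) (z : Fin (n - k) → Fin d) :
    (jn hkn a z) ∘ ⇑(embk hkn τ) = jn hkn (a ∘ ⇑τ) z := by
  funext i
  by_cases h : (i : ℕ) < k
  · rw [Function.comp_apply, embk_apply_lt hkn τ i h]
    simp only [jn]
    rw [dif_pos ((τ ⟨(i : ℕ), h⟩).isLt), dif_pos h]
    rfl
  · rw [Function.comp_apply, embk_apply_ge hkn τ i h]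
    simp only [jn]
    rw [dif_neg h, dif_neg h]

section WithPhi
variable (hkn : k ≤ n) (φ : Fin n → Fin d → ℂ)

lemma outer_slater_left (π : Perm (Fin n)) (a b : Fin n → Fin d) :
    outer (slater φ) (a ∘ ⇑π) b = sgnC π * outer (slater φ) a b := by
  simp only [outer, slater_perm]
  ring

lemma outer_slater_right (π : Perm (Fin n)) (a b : Fin n → Fin d) :
    outer (slater φ) a (b ∘ ⇑π) = sgnC π * outer (slater φ) a b := by
  simp only [outer, slater_perm, _root_.map_mul, conj_sgnC]
  ring

lemma ptl_apply (a b : Fin k → Fin d) :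
    ptraceLast hkn (outer (slater φ)) a b
      = ∑ z : Fin (n - k) → Fin d,
          slater φ (jn hkn a z) * (starRingEnd ℂ) (slater φ (jn hkn b z)) := rfl

lemma ptl_left (τ : Perm (Fin k)) (a b : Fin k → Fin d) :
    ptraceLast hkn (outer (slater φ)) (a ∘ ⇑τ) b
      = sgnC τ * ptraceLast hkn (outer (slater φ)) a b := by
  rw [ptl_apply, ptl_apply, Finset.mul_sum]
  refine Finset.sum_congr rfl fun z _ => ?_
  rw [← jn_embk hkn τ a z, slater_perm, sgnC_embk]
  ring

lemma ptl_right (τ : Perm (Fin k)) (a b : Fin k → Fin d) :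
    ptraceLast hkn (outer (slater φ)) a (b ∘ ⇑τ)
      = sgnC τ * ptraceLast hkn (outer (slater φ)) a b := by
  rw [ptl_apply, ptl_apply, Finset.mul_sum]
  refine Finset.sum_congr rfl fun z _ => ?_
  rw [← jn_embk hkn τ b z, slater_perm, _root_.map_mul, sgnC_embk, conj_sgnC]
  ring

lemma antiPTrace_outer :
    antiPTrace d hkn (outer (slater φ)) = ptraceLast hkn (outer (slater φ)) := by
  unfold antiPTrace
  rw [antiProj_mul_left (outer (slater φ)) (outer_slater_left φ),
    antiProj_mul_right (outer (slater φ)) (outer_slater_right φ),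
    antiProj_mul_left _ (ptl_left hkn φ), antiProj_mul_right _ (ptl_right hkn φ)]

lemma antiClone_ptl :
    antiClone d hkn (ptraceLast hkn (outer (slater φ)))
      = ((d.choose k : ℂ) / (d.choose n : ℂ)) •
          (antiProj d n * extendId hkn (ptraceLast hkn (outer (slater φ))) * antiProj d n) := by
  unfold antiClone
  rw [antiProj_mul_left _ (ptl_left hkn φ), antiProj_mul_right _ (ptl_right hkn φ)]

lemma slater_comp (π : Perm (Fin n)) : ∀ a, slater φ (a ∘ ⇑π) = sgnC π * slater φ a :=
  fun a => slater_perm φ π a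

end WithPhi
end ACAux
end Aux3
noncomputable section Aux4
open Equiv
namespace ACAux

variable {d k n : ℕ}

lemma sum_swap13 {B P Q T : Type*} [Fintype B] [Fintype P] [Fintype Q] [Fintype T]
    (F : B → P → Q → T → ℂ) :
    (∑ b : B, ∑ p : P, ∑ q : Q, ∑ t : T, F b p q t)
      = ∑ p : P, ∑ q : Q, ∑ t : T, ∑ b : B, F b p q t :=
  calc (∑ b : B, ∑ p : P, ∑ q : Q, ∑ t : T, F b p q t)
      = ∑ p : P, ∑ b : B, ∑ q : Q, ∑ t : T, F b p q t := Finset.sum_comm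
    _ = ∑ p : P, ∑ q : Q, ∑ b : B, ∑ t : T, F b p q t :=
        Finset.sum_congr rfl fun p _ => Finset.sum_comm
    _ = ∑ p : P, ∑ q : Q, ∑ t : T, ∑ b : B, F b p q t :=
        Finset.sum_congr rfl fun p _ => Finset.sum_congr rfl fun q _ => Finset.sum_comm

lemma sum5_reorder {B Z P Q T : Type*} [Fintype B] [Fintype Z] [Fintype P] [Fintype Q] [Fintype T]
    (F : B → Z → P → Q → T → ℂ) :
    (∑ b : B, ∑ z : Z, ∑ p : P, ∑ q : Q, ∑ t : T, F b z p q t)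
      = ∑ p : P, ∑ q : Q, ∑ t : T, ∑ z : Z, ∑ b : B, F b z p q t :=
  calc (∑ b : B, ∑ z : Z, ∑ p : P, ∑ q : Q, ∑ t : T, F b z p q t)
      = ∑ z : Z, ∑ b : B, ∑ p : P, ∑ q : Q, ∑ t : T, F b z p q t := Finset.sum_comm
    _ = ∑ z : Z, ∑ p : P, ∑ q : Q, ∑ t : T, ∑ b : B, F b z p q t :=
        Finset.sum_congr rfl fun z _ => sum_swap13 (fun b p q t => F b z p q t)
    _ = ∑ p : P, ∑ q : Q, ∑ t : T, ∑ z : Z, ∑ b : B, F b z p q t :=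
        sum_swap13 (fun z p q t => ∑ b : B, F b z p q t)

lemma mul3_sum {P Q T : Type*} [Fintype P] [Fintype Q] [Fintype T]
    (c : ℂ) (A : P → ℂ) (B : Q → ℂ) (C : T → ℂ) :
    (c * ∑ p, A p) * ((c * ∑ q, B q) * (c * ∑ t, C t))
      = ∑ p, ∑ q, ∑ t, c ^ 3 * (A p * (B q * C t)) := by
  calc (c * ∑ p, A p) * ((c * ∑ q, B q) * (c * ∑ t, C t))
      = c ^ 3 * ((∑ p, A p) * ((∑ q, B q) * (∑ t, C t))) := by ring
    _ = c ^ 3 * ((∑ p, A p) * (∑ q, ∑ t, B q * C t)) := by rw [Finset.sum_mul_sum]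
    _ = c ^ 3 * (∑ p, ∑ q, A p * ∑ t, B q * C t) := by rw [Finset.sum_mul_sum]
    _ = ∑ p, ∑ q, ∑ t, c ^ 3 * (A p * (B q * C t)) := by
        rw [Finset.mul_sum]
        refine Finset.sum_congr rfl fun p _ => ?_
        rw [Finset.mul_sum]
        refine Finset.sum_congr rfl fun q _ => ?_
        rw [Finset.mul_sum, Finset.mul_sum]

lemma pull2 {A B : Type*} [Fintype A] [Fintype B] (K : ℂ) (F : A → ℂ) (G : B → ℂ) :
    (∑ α : A, ∑ β : B, K * (F α * G β)) = K * ((∑ α, F α) * (∑ β, G β)) := by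
  rw [Finset.sum_mul_sum]
  simp only [Finset.mul_sum]

/-- The reshuffling of a triple of permutations. -/
def permShuffle (m : ℕ) :
    (Perm (Fin m) × Perm (Fin m) × Perm (Fin m)) ≃
      (Perm (Fin m) × Perm (Fin m) × Perm (Fin m)) where
  toFun x := (x.1 * x.2.2⁻¹, x.1 * x.2.2⁻¹ * x.2.1⁻¹, x.1 * x.2.2⁻¹ * x.2.1⁻¹ * x.2.2)
  invFun y := (y.1 * y.2.1⁻¹ * y.2.2, y.2.1⁻¹ * y.1, y.2.1⁻¹ * y.2.2)
  left_inv := by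
    rintro ⟨σ, α, β⟩
    simp [mul_assoc]
  right_inv := by
    rintro ⟨π, ρ, τ⟩
    simp [mul_assoc]

lemma sum_perm3_reindex {m : ℕ} (G : Perm (Fin m) → Perm (Fin m) → Perm (Fin m) → ℂ) :
    (∑ π : Perm (Fin m), ∑ ρ : Perm (Fin m), ∑ τ : Perm (Fin m), G π ρ τ)
      = ∑ σ : Perm (Fin m), ∑ α : Perm (Fin m), ∑ β : Perm (Fin m),
          G (σ * β⁻¹) (σ * β⁻¹ * α⁻¹) (σ * β⁻¹ * α⁻¹ * β) := by
  have h1 : (∑ π : Perm (Fin m), ∑ ρ : Perm (Fin m), ∑ τ : Perm (Fin m), G π ρ τ)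
      = ∑ x : Perm (Fin m) × Perm (Fin m) × Perm (Fin m), G x.1 x.2.1 x.2.2 := by
    rw [Fintype.sum_prod_type]
    exact Finset.sum_congr rfl fun π _ => by rw [Fintype.sum_prod_type]
  have h2 : (∑ x : Perm (Fin m) × Perm (Fin m) × Perm (Fin m),
        G ((permShuffle m x).1) ((permShuffle m x).2.1) ((permShuffle m x).2.2))
      = ∑ σ : Perm (Fin m), ∑ α : Perm (Fin m), ∑ β : Perm (Fin m),
          G (σ * β⁻¹) (σ * β⁻¹ * α⁻¹) (σ * β⁻¹ * α⁻¹ * β) := by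
    rw [Fintype.sum_prod_type]
    refine Finset.sum_congr rfl fun σ _ => ?_
    rw [Fintype.sum_prod_type]
    exact Finset.sum_congr rfl fun α _ => Finset.sum_congr rfl fun β _ => rfl
  rw [h1, ← h2]
  exact (Equiv.sum_comp (permShuffle m) (fun x => G x.1 x.2.1 x.2.2)).symm

/-- Product over the first block. -/
def PAf (hkn : k ≤ n) (φ : Fin n → Fin d → ℂ) (π : Perm (Fin n)) (w : Fin k → Fin d) : ℂ :=
  ∏ i : Fin k, φ (π (es hkn (Sum.inl i))) (w i)

def PZf (hkn : k ≤ n) (φ : Fin n → Fin d → ℂ) (π : Perm (Fin n)) (z : Fin (n - k) → Fin d) : ℂ :=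
  ∏ j : Fin (n - k), φ (π (es hkn (Sum.inr j))) (z j)

def QAf (hkn : k ≤ n) (φ : Fin n → Fin d → ℂ) (π : Perm (Fin n)) (w : Fin k → Fin d) : ℂ :=
  ∏ i : Fin k, (starRingEnd ℂ) (φ (π (es hkn (Sum.inl i))) (w i))

def QZf (hkn : k ≤ n) (φ : Fin n → Fin d → ℂ) (π : Perm (Fin n)) (z : Fin (n - k) → Fin d) : ℂ :=
  ∏ j : Fin (n - k), (starRingEnd ℂ) (φ (π (es hkn (Sum.inr j))) (z j))

lemma slater_jn' (hkn : k ≤ n) (φ : Fin n → Fin d → ℂ) (a : Fin k → Fin d) (z : Fin (n - k) → Fin d) :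
    slater φ (jn hkn a z) = ((Real.sqrt n.factorial : ℂ))⁻¹ *
      ∑ π : Perm (Fin n), sgnC π * (PAf hkn φ π a * PZf hkn φ π z) := slater_jn hkn φ a z

lemma conj_slater_jn' (hkn : k ≤ n) (φ : Fin n → Fin d → ℂ) (a : Fin k → Fin d) (z : Fin (n - k) → Fin d) :
    (starRingEnd ℂ) (slater φ (jn hkn a z)) = ((Real.sqrt n.factorial : ℂ))⁻¹ *
      ∑ π : Perm (Fin n), sgnC π * (QAf hkn φ π a * QZf hkn φ π z) := conj_slater_jn hkn φ a z

lemma zcollapse (hkn : k ≤ n) (φ : Fin n → Fin d → ℂ)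
    (hφ : ∀ i j, (∑ a, (starRingEnd ℂ) (φ i a) * φ j a) = if i = j then 1 else 0)
    (π ρ : Perm (Fin n)) :
    (∑ z : Fin (n - k) → Fin d, PZf hkn φ π z * QZf hkn φ ρ z)
      = if (∀ x : Fin n, ¬ (x : ℕ) < k → ρ x = π x) then 1 else 0 := by
  have h1 : ∀ z : Fin (n - k) → Fin d, PZf hkn φ π z * QZf hkn φ ρ z
      = ∏ j : Fin (n - k),
          (starRingEnd ℂ) (φ (ρ (es hkn (Sum.inr j))) (z j)) * φ (π (es hkn (Sum.inr j))) (z j) := by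
    intro z
    rw [PZf, QZf, ← Finset.prod_mul_distrib]
    exact Finset.prod_congr rfl fun j _ => by ring
  rw [Finset.sum_congr rfl fun z _ => h1 z,
    orth_sum φ hφ (fun j => ρ (es hkn (Sum.inr j))) (fun j => π (es hkn (Sum.inr j)))]
  refine if_congr ?_ rfl rfl
  constructor
  · intro h x hx
    rw [← es_surj_ge hkn x hx]
    exact h _
  · intro h j
    exact h _ (es_inr_not_lt hkn j)

lemma bcollapse (hkn : k ≤ n) (φ : Fin n → Fin d → ℂ)
    (hφ : ∀ i j, (∑ a, (starRingEnd ℂ) (φ i a) * φ j a) = if i = j then 1 else 0)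
    (ρ τ : Perm (Fin n)) :
    (∑ b : Fin k → Fin d, QAf hkn φ ρ b * PAf hkn φ τ b)
      = if (∀ x : Fin n, (x : ℕ) < k → ρ x = τ x) then 1 else 0 := by
  have h1 : ∀ b : Fin k → Fin d, QAf hkn φ ρ b * PAf hkn φ τ b
      = ∏ i : Fin k,
          (starRingEnd ℂ) (φ (ρ (es hkn (Sum.inl i))) (b i)) * φ (τ (es hkn (Sum.inl i))) (b i) := by
    intro b
    rw [QAf, PAf, ← Finset.prod_mul_distrib]
  rw [Finset.sum_congr rfl fun b _ => h1 b,
    orth_sum φ hφ (fun i => ρ (es hkn (Sum.inl i))) (fun i => τ (es hkn (Sum.inl i)))]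
  refine if_congr ?_ rfl rfl
  constructor
  · intro h x hx
    rw [← es_surj_lt hkn x hx]
    exact h _
  · intro h i
    exact h _ (es_inl_lt hkn i)

/-- Counting permutations fixing all indices `≥ k`. -/
def ekk (hkn : k ≤ n) : Fin k ≃ {i : Fin n // (i : ℕ) < k} where
  toFun i := ⟨⟨(i : ℕ), lt_of_lt_of_le i.isLt hkn⟩, i.isLt⟩
  invFun j := ⟨(j.1 : ℕ), j.2⟩
  left_inv i := rfl
  right_inv j := rfl

def enr (hkn : k ≤ n) : Fin (n - k) ≃ {x : Fin n // ¬ (x : ℕ) < k} where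
  toFun j := ⟨⟨k + (j : ℕ), by have := j.isLt; omega⟩, by show ¬ (k + (j : ℕ)) < k; omega⟩
  invFun x := ⟨(x.1 : ℕ) - k, by have h1 := x.1.isLt; have h2 := x.2; omega⟩
  left_inv j := Fin.ext (by show k + (j : ℕ) - k = (j : ℕ); omega)
  right_inv x := Subtype.ext (Fin.ext (by have h2 := x.2; show k + ((x.1 : ℕ) - k) = (x.1 : ℕ); omega))

lemma count_fix_ge (hkn : k ≤ n) :
    (∑ α : Perm (Fin n), (if (∀ x : Fin n, ¬ (x : ℕ) < k → α x = x) then (1 : ℂ) else 0))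
      = (k.factorial : ℂ) := by
  classical
  rw [Finset.sum_boole]
  have h1 : (Finset.univ.filter fun α : Perm (Fin n) => ∀ x : Fin n, ¬ (x : ℕ) < k → α x = x).card
      = Fintype.card {f : Perm (Fin n) // ∀ x : Fin n, ¬ (x : ℕ) < k → f x = x} :=
    (Fintype.card_subtype _).symm
  have h2 : Fintype.card {f : Perm (Fin n) // ∀ x : Fin n, ¬ (x : ℕ) < k → f x = x}
      = Fintype.card (Perm {x : Fin n // (x : ℕ) < k}) :=
    (Fintype.card_congr (Equiv.Perm.subtypeEquivSubtypePerm (fun x : Fin n => (x : ℕ) < k))).symm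
  have h4 : Fintype.card {x : Fin n // (x : ℕ) < k} = k := by
    have h5 := Fintype.card_congr (ekk hkn)
    rw [Fintype.card_fin] at h5
    exact h5.symm
  rw [h1, h2, Fintype.card_perm, h4]

lemma count_fix_lt (hkn : k ≤ n) :
    (∑ β : Perm (Fin n), (if (∀ x : Fin n, (x : ℕ) < k → β x = x) then (1 : ℂ) else 0))
      = ((n - k).factorial : ℂ) := by
  classical
  rw [Finset.sum_boole]
  have h1 : (Finset.univ.filter fun β : Perm (Fin n) => ∀ x : Fin n, (x : ℕ) < k → β x = x).card
      = Fintype.card {f : Perm (Fin n) // ∀ x : Fin n, (x : ℕ) < k → f x = x} :=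
    (Fintype.card_subtype _).symm
  have e0 : {f : Perm (Fin n) // ∀ x : Fin n, (x : ℕ) < k → f x = x}
      ≃ {f : Perm (Fin n) // ∀ x : Fin n, ¬ ¬ (x : ℕ) < k → f x = x} :=
    Equiv.subtypeEquivRight (fun f => by
      constructor
      · intro h x hx
        exact h x (not_not.mp hx)
      · intro h x hx
        exact h x (not_not.mpr hx))
  have h2 : Fintype.card {f : Perm (Fin n) // ∀ x : Fin n, ¬ ¬ (x : ℕ) < k → f x = x}
      = Fintype.card (Perm {x : Fin n // ¬ (x : ℕ) < k}) :=
    (Fintype.card_congr (Equiv.Perm.subtypeEquivSubtypePerm (fun x : Fin n => ¬ (x : ℕ) < k))).symm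
  have h4 : Fintype.card {x : Fin n // ¬ (x : ℕ) < k} = n - k := by
    have h5 := Fintype.card_congr (enr hkn)
    rw [Fintype.card_fin] at h5
    exact h5.symm
  rw [h1, Fintype.card_congr e0, h2, Fintype.card_perm, h4]

/-- pairing equivalence -/
def jnEquiv (hkn : k ≤ n) : ((Fin k → Fin d) × (Fin (n - k) → Fin d)) ≃ (Fin n → Fin d) where
  toFun p := jn hkn p.1 p.2
  invFun g := (fun i => g (es hkn (Sum.inl i)), fun j => g (es hkn (Sum.inr j)))
  left_inv p := by
    refine Prod.ext (funext fun i => ?_) (funext fun j => ?_)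
    · exact jn_es_inl hkn p.1 p.2 i
    · exact jn_es_inr hkn p.1 p.2 j
  right_inv g := by
    funext i
    by_cases h : (i : ℕ) < k
    · show jn hkn _ _ i = g i
      simp only [jn]
      rw [dif_pos h]
      exact congrArg g (es_surj_lt hkn i h)
    · show jn hkn _ _ i = g i
      simp only [jn]
      rw [dif_neg h]
      exact congrArg g (es_surj_ge hkn i h)

end ACAux
end Aux4
noncomputable section Aux5
open Equiv
namespace ACAux

variable {d k n : ℕ}

lemma core_mulVec (hkn : k ≤ n) (φ : Fin n → Fin d → ℂ)
    (hφ : ∀ i j, (∑ a, (starRingEnd ℂ) (φ i a) * φ j a) = if i = j then 1 else 0) :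
    (extendId hkn (ptraceLast hkn (outer (slater φ)))) *ᵥ (slater φ)
      = (((k.factorial : ℂ) * ((n - k).factorial : ℂ)) / (n.factorial : ℂ)) • slater φ := by
  classical
  funext f
  set c : ℂ := ((Real.sqrt n.factorial : ℂ))⁻¹ with hc
  set Mm : Matrix (Fin k → Fin d) (Fin k → Fin d) ℂ := ptraceLast hkn (outer (slater φ)) with hMm
  set a : Fin k → Fin d := fun i => f (Fin.castLE hkn i) with ha
  set y : Fin (n - k) → Fin d := fun j => f (es hkn (Sum.inr j)) with hy
  have hje : ∀ p : (Fin k → Fin d) × (Fin (n - k) → Fin d),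
      (jnEquiv (d := d) hkn) p = jn hkn p.1 p.2 := fun p => rfl
  -- Step A : collapse the tail of the mulVec sum
  have hstepA : ((extendId hkn Mm) *ᵥ (slater φ)) f
      = ∑ b : Fin k → Fin d, Mm a b * slater φ (jn hkn b y) := by
    rw [Matrix.mulVec, dotProduct,
      ← Equiv.sum_comp (jnEquiv (d := d) hkn) (fun g => extendId hkn Mm f g * slater φ g),
      Fintype.sum_prod_type]
    refine Finset.sum_congr rfl fun b _ => ?_
    have hinner : ∀ z' : Fin (n - k) → Fin d,
        extendId hkn Mm f (jn hkn b z') * slater φ (jn hkn b z')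
          = if z' = y then Mm a b * slater φ (jn hkn b z') else 0 := by
      intro z'
      have hsecond : (fun i => jn hkn b z' (Fin.castLE hkn i)) = b := by
        funext i
        rw [← es_inl_castLE hkn i]
        exact jn_es_inl hkn b z' i
      have hcond : (∀ i : Fin n, k ≤ (i : ℕ) → f i = jn hkn b z' i) ↔ z' = y := by
        constructor
        · intro h
          funext j
          have h1 := h (es hkn (Sum.inr j)) (le_of_not_gt (es_inr_not_lt hkn j))
          rw [jn_es_inr hkn b z' j] at h1
          exact h1.symm
        · intro hzy i hi
          have hnot : ¬ (i : ℕ) < k := not_lt.mpr hi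
          rw [hzy]
          show f i = jn hkn b y i
          simp only [jn]
          rw [dif_neg hnot]
          exact (congrArg f (es_surj_ge hkn i hnot)).symm
      show ((if ∀ i : Fin n, k ≤ (i : ℕ) → f i = jn hkn b z' i then (1 : ℂ) else 0) *
          Mm (fun i => f (Fin.castLE hkn i)) (fun i => jn hkn b z' (Fin.castLE hkn i)))
            * slater φ (jn hkn b z') = _
      rw [hsecond, if_congr hcond rfl rfl, ← ha]
      by_cases hz : z' = y
      · rw [if_pos hz, if_pos hz, one_mul]
      · rw [if_neg hz, if_neg hz, zero_mul, zero_mul]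
    calc (∑ z' : Fin (n - k) → Fin d,
            extendId hkn Mm f ((jnEquiv (d := d) hkn) (b, z')) * slater φ ((jnEquiv (d := d) hkn) (b, z')))
        = ∑ z' : Fin (n - k) → Fin d,
            (if z' = y then Mm a b * slater φ (jn hkn b z') else 0) := by
          refine Finset.sum_congr rfl fun z' _ => ?_
          rw [hje (b, z')]
          exact hinner z'
      _ = Mm a b * slater φ (jn hkn b y) := by
          rw [Finset.sum_ite_eq' Finset.univ y (fun z' => Mm a b * slater φ (jn hkn b z'))]
          simp
  -- Step B : expand Mm
  have hMab : ∀ b, Mm a b * slater φ (jn hkn b y)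
      = ∑ z : Fin (n - k) → Fin d, slater φ (jn hkn a z) *
          ((starRingEnd ℂ) (slater φ (jn hkn b z)) * slater φ (jn hkn b y)) := by
    intro b
    rw [hMm, ptl_apply hkn φ a b, Finset.sum_mul]
    exact Finset.sum_congr rfl fun z _ => by ring
  -- Step C : expand the three slater factors
  have hexp : ∀ (b : Fin k → Fin d) (z : Fin (n - k) → Fin d),
      slater φ (jn hkn a z) * ((starRingEnd ℂ) (slater φ (jn hkn b z)) * slater φ (jn hkn b y))
        = ∑ π : Perm (Fin n), ∑ ρ : Perm (Fin n), ∑ τ : Perm (Fin n), c ^ 3 *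
            ((sgnC π * (PAf hkn φ π a * PZf hkn φ π z)) *
              ((sgnC ρ * (QAf hkn φ ρ b * QZf hkn φ ρ z)) *
                (sgnC τ * (PAf hkn φ τ b * PZf hkn φ τ y)))) := by
    intro b z
    rw [slater_jn' hkn φ a z, conj_slater_jn' hkn φ b z, slater_jn' hkn φ b y]
    exact mul3_sum c _ _ _
  -- Step D : the big pull and collapse
  have hpull : ∀ π ρ τ : Perm (Fin n),
      (∑ z : Fin (n - k) → Fin d, ∑ b : Fin k → Fin d, c ^ 3 *
          ((sgnC π * (PAf hkn φ π a * PZf hkn φ π z)) *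
            ((sgnC ρ * (QAf hkn φ ρ b * QZf hkn φ ρ z)) *
              (sgnC τ * (PAf hkn φ τ b * PZf hkn φ τ y)))))
        = (c ^ 3 * (sgnC π * (sgnC ρ * (sgnC τ * (PAf hkn φ π a * PZf hkn φ τ y))))) *
            ((∑ z : Fin (n - k) → Fin d, PZf hkn φ π z * QZf hkn φ ρ z) *
              (∑ b : Fin k → Fin d, QAf hkn φ ρ b * PAf hkn φ τ b)) := by
    intro π ρ τ
    calc (∑ z : Fin (n - k) → Fin d, ∑ b : Fin k → Fin d, c ^ 3 *
          ((sgnC π * (PAf hkn φ π a * PZf hkn φ π z)) *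
            ((sgnC ρ * (QAf hkn φ ρ b * QZf hkn φ ρ z)) *
              (sgnC τ * (PAf hkn φ τ b * PZf hkn φ τ y)))))
        = ∑ z : Fin (n - k) → Fin d, ∑ b : Fin k → Fin d,
            (c ^ 3 * (sgnC π * (sgnC ρ * (sgnC τ * (PAf hkn φ π a * PZf hkn φ τ y))))) *
              ((PZf hkn φ π z * QZf hkn φ ρ z) * (QAf hkn φ ρ b * PAf hkn φ τ b)) :=
          Finset.sum_congr rfl fun z _ => Finset.sum_congr rfl fun b _ => by ring
      _ = (c ^ 3 * (sgnC π * (sgnC ρ * (sgnC τ * (PAf hkn φ π a * PZf hkn φ τ y))))) *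
            ((∑ z : Fin (n - k) → Fin d, PZf hkn φ π z * QZf hkn φ ρ z) *
              (∑ b : Fin k → Fin d, QAf hkn φ ρ b * PAf hkn φ τ b)) := pull2 _ _ _
  have hbig : ((extendId hkn Mm) *ᵥ (slater φ)) f
      = ∑ π : Perm (Fin n), ∑ ρ : Perm (Fin n), ∑ τ : Perm (Fin n),
          (c ^ 3 * (sgnC π * (sgnC ρ * (sgnC τ * (PAf hkn φ π a * PZf hkn φ τ y))))) *
            ((if (∀ x : Fin n, ¬ (x : ℕ) < k → ρ x = π x) then 1 else 0) *
              (if (∀ x : Fin n, (x : ℕ) < k → ρ x = τ x) then 1 else 0)) := by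
    rw [hstepA, Finset.sum_congr rfl fun b _ => hMab b,
      Finset.sum_congr rfl fun b _ => Finset.sum_congr rfl fun z _ => hexp b z,
      sum5_reorder]
    refine Finset.sum_congr rfl fun π _ => Finset.sum_congr rfl fun ρ _ =>
      Finset.sum_congr rfl fun τ _ => ?_
    rw [hpull π ρ τ, zcollapse hkn φ hφ π ρ, bcollapse hkn φ hφ ρ τ]
  -- Step E : reparametrize the triple permutation sum
  have hsummand : ∀ σ α β : Perm (Fin n),
      (c ^ 3 * (sgnC (σ * β⁻¹) * (sgnC (σ * β⁻¹ * α⁻¹) *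
          (sgnC (σ * β⁻¹ * α⁻¹ * β) * (PAf hkn φ (σ * β⁻¹) a * PZf hkn φ (σ * β⁻¹ * α⁻¹ * β) y))))) *
        ((if (∀ x : Fin n, ¬ (x : ℕ) < k → (σ * β⁻¹ * α⁻¹) x = (σ * β⁻¹) x) then 1 else 0) *
          (if (∀ x : Fin n, (x : ℕ) < k → (σ * β⁻¹ * α⁻¹) x = (σ * β⁻¹ * α⁻¹ * β) x) then 1 else 0))
      = (c ^ 3 * (sgnC σ * (PAf hkn φ σ a * PZf hkn φ σ y))) *
          ((if (∀ x : Fin n, ¬ (x : ℕ) < k → α x = x) then 1 else 0) *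
            (if (∀ x : Fin n, (x : ℕ) < k → β x = x) then 1 else 0)) := by
    intro σ α β
    have hc1 : (∀ x : Fin n, ¬ (x : ℕ) < k → (σ * β⁻¹ * α⁻¹) x = (σ * β⁻¹) x)
        ↔ (∀ x : Fin n, ¬ (x : ℕ) < k → α x = x) := by
      constructor
      · intro h x hx
        have h1 := h x hx
        simp only [Equiv.Perm.mul_apply] at h1
        have h3 : α⁻¹ x = x := β⁻¹.injective (σ.injective h1)
        have h4 := congrArg α h3
        rw [Equiv.Perm.coe_inv, Equiv.apply_symm_apply] at h4
        exact h4.symm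
      · intro h x hx
        have h3 : α⁻¹ x = x := by
          conv_lhs => rw [← h x hx]
          exact α.symm_apply_apply x
        simp only [Equiv.Perm.mul_apply, h3]
    have hc2 : (∀ x : Fin n, (x : ℕ) < k → (σ * β⁻¹ * α⁻¹) x = (σ * β⁻¹ * α⁻¹ * β) x)
        ↔ (∀ x : Fin n, (x : ℕ) < k → β x = x) := by
      constructor
      · intro h x hx
        have h1 := h x hx
        simp only [Equiv.Perm.mul_apply] at h1
        exact (α⁻¹.injective (β⁻¹.injective (σ.injective h1))).symm
      · intro h x hx
        simp only [Equiv.Perm.mul_apply, h x hx]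
    rw [if_congr hc1 rfl rfl, if_congr hc2 rfl rfl]
    by_cases hα : (∀ x : Fin n, ¬ (x : ℕ) < k → α x = x)
    · by_cases hβ : (∀ x : Fin n, (x : ℕ) < k → β x = x)
      · rw [if_pos hα, if_pos hβ]
        have hβ' : ∀ x : Fin n, (x : ℕ) < k → β⁻¹ x = x := by
          intro x hx
          conv_lhs => rw [← hβ x hx]
          exact β.symm_apply_apply x
        have hα' : ∀ x : Fin n, ¬ (x : ℕ) < k → α⁻¹ x = x := by
          intro x hx
          conv_lhs => rw [← hα x hx]
          exact α.symm_apply_apply x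
        have hβk : ∀ x : Fin n, ¬ (x : ℕ) < k → ¬ ((β x : Fin n) : ℕ) < k := by
          intro x hx hcon
          have h5 := hβ (β x) hcon
          have h6 := β.injective h5
          rw [h6] at hcon
          exact hx hcon
        have hPA : PAf hkn φ (σ * β⁻¹) a = PAf hkn φ σ a := by
          refine Finset.prod_congr rfl fun i _ => ?_
          have harg : (σ * β⁻¹) (es hkn (Sum.inl i)) = σ (es hkn (Sum.inl i)) := by
            show σ (β⁻¹ (es hkn (Sum.inl i))) = σ (es hkn (Sum.inl i))
            rw [hβ' _ (es_inl_lt hkn i)]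
          rw [harg]
        have hPZ : PZf hkn φ (σ * β⁻¹ * α⁻¹ * β) y = PZf hkn φ σ y := by
          refine Finset.prod_congr rfl fun j _ => ?_
          have harg : (σ * β⁻¹ * α⁻¹ * β) (es hkn (Sum.inr j)) = σ (es hkn (Sum.inr j)) := by
            show σ (β⁻¹ (α⁻¹ (β (es hkn (Sum.inr j))))) = σ (es hkn (Sum.inr j))
            rw [hα' _ (hβk _ (es_inr_not_lt hkn j)), Equiv.Perm.coe_inv, Equiv.symm_apply_apply]
          rw [harg]
        have hsgn : sgnC (σ * β⁻¹) * (sgnC (σ * β⁻¹ * α⁻¹) * sgnC (σ * β⁻¹ * α⁻¹ * β)) = sgnC σ := by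
          simp only [sgnC_mul, sgnC_inv]
          rcases sgnC_cases σ with h1 | h1 <;> rcases sgnC_cases α with h2 | h2 <;>
            rcases sgnC_cases β with h3 | h3 <;> rw [h1, h2, h3] <;> ring
        rw [hPA, hPZ]
        linear_combination (c ^ 3 * (PAf hkn φ σ a * PZf hkn φ σ y)) * hsgn
      · rw [if_neg hβ]
        ring
    · rw [if_neg hα]
      ring
  -- Step F : final assembly
  have hvf : slater φ f = c * ∑ σ : Perm (Fin n), sgnC σ * (PAf hkn φ σ a * PZf hkn φ σ y) := by
    have hf : f = jn hkn a y := by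
      funext i
      by_cases h : (i : ℕ) < k
      · simp only [jn]
        rw [dif_pos h]
        show f i = f (Fin.castLE hkn ⟨(i : ℕ), h⟩)
        exact congrArg f (Fin.ext rfl)
      · simp only [jn]
        rw [dif_neg h]
        show f i = f (es hkn (Sum.inr ⟨(i : ℕ) - k, _⟩))
        exact (congrArg f (es_surj_ge hkn i h)).symm
    conv_lhs => rw [hf]
    exact slater_jn' hkn φ a y
  have hfinal : ((extendId hkn Mm) *ᵥ (slater φ)) f
      = (c ^ 3 * ∑ σ : Perm (Fin n), sgnC σ * (PAf hkn φ σ a * PZf hkn φ σ y)) *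
          ((k.factorial : ℂ) * ((n - k).factorial : ℂ)) := by
    rw [hbig, sum_perm3_reindex]
    rw [Finset.sum_congr rfl fun σ _ => Finset.sum_congr rfl fun α _ =>
      Finset.sum_congr rfl fun β _ => hsummand σ α β]
    rw [Finset.sum_congr rfl fun σ _ => pull2 (c ^ 3 * (sgnC σ * (PAf hkn φ σ a * PZf hkn φ σ y)))
      (fun α : Perm (Fin n) => if (∀ x : Fin n, ¬ (x : ℕ) < k → α x = x) then (1 : ℂ) else 0)
      (fun β : Perm (Fin n) => if (∀ x : Fin n, (x : ℕ) < k → β x = x) then (1 : ℂ) else 0)]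
    rw [Finset.sum_congr rfl fun σ _ => by rw [count_fix_ge hkn, count_fix_lt hkn]]
    rw [← Finset.sum_mul, Finset.mul_sum]
  have hcc : c * c = ((n.factorial : ℂ))⁻¹ := by
    rw [hc, ← mul_inv]
    congr 1
    have h := Real.mul_self_sqrt (show (0:ℝ) ≤ (n.factorial : ℝ) by positivity)
    calc ((Real.sqrt (n.factorial : ℝ) : ℂ)) * ((Real.sqrt (n.factorial : ℝ) : ℂ))
        = ((Real.sqrt (n.factorial : ℝ) * Real.sqrt (n.factorial : ℝ) : ℝ) : ℂ) := by
          rw [Complex.ofReal_mul]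
      _ = ((n.factorial : ℝ) : ℂ) := by rw [h]
      _ = (n.factorial : ℂ) := by norm_cast
  have hn0 : ((n.factorial : ℂ)) ≠ 0 := by
    exact_mod_cast Nat.cast_ne_zero.mpr n.factorial_ne_zero
  rw [hfinal, Pi.smul_apply, smul_eq_mul, hvf]
  have hS : c ^ 3 = (c * c) * c := by ring
  rw [hS, hcc]
  field_simp
end ACAux
end Aux5
noncomputable section Aux6
open Equiv
namespace ACAux

variable {d k n : ℕ}

lemma aSum_def (φ : Fin n → Fin d → ℂ) (g : Fin n → Fin d) :
    aSum φ g = ∑ π : Perm (Fin n), sgnC π * ∏ i, φ (π i) (g i) := rfl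

lemma conj_slater (φ : Fin n → Fin d → ℂ) (f : Fin n → Fin d) :
    (starRingEnd ℂ) (slater φ f) = ((Real.sqrt n.factorial : ℂ))⁻¹ *
      ∑ π : Perm (Fin n), sgnC π * ∏ i, (starRingEnd ℂ) (φ (π i) (f i)) := by
  rw [slater_eq, aSum_def, _root_.map_mul, map_sum]
  congr 1
  · rw [map_inv₀]
    simp [Complex.conj_ofReal, Complex.ofReal_inv]
  · exact Finset.sum_congr rfl fun π _ => by rw [_root_.map_mul, conj_sgnC, map_prod]

lemma mul2_sum {P Q : Type*} [Fintype P] [Fintype Q] (c : ℂ) (A : P → ℂ) (B : Q → ℂ) :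
    (c * ∑ p, A p) * (c * ∑ q, B q) = ∑ p, ∑ q, (c * c) * (A p * B q) := by
  calc (c * ∑ p, A p) * (c * ∑ q, B q) = (c * c) * ((∑ p, A p) * (∑ q, B q)) := by ring
    _ = (c * c) * ∑ p, ∑ q, A p * B q := by rw [Finset.sum_mul_sum]
    _ = ∑ p, ∑ q, (c * c) * (A p * B q) := by
        rw [Finset.mul_sum]
        refine Finset.sum_congr rfl fun p _ => ?_
        rw [Finset.mul_sum]

lemma fact_ne_zero' (m : ℕ) : ((m.factorial : ℂ)) ≠ 0 :=
  Nat.cast_ne_zero.mpr m.factorial_ne_zero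

lemma sqrt_fact_sq (m : ℕ) :
    ((Real.sqrt m.factorial : ℂ))⁻¹ * ((Real.sqrt m.factorial : ℂ))⁻¹ = ((m.factorial : ℂ))⁻¹ := by
  rw [← mul_inv]
  congr 1
  have h := Real.mul_self_sqrt (show (0:ℝ) ≤ (m.factorial : ℝ) by positivity)
  calc ((Real.sqrt (m.factorial : ℝ) : ℂ)) * ((Real.sqrt (m.factorial : ℝ) : ℂ))
      = ((Real.sqrt (m.factorial : ℝ) * Real.sqrt (m.factorial : ℝ) : ℝ) : ℂ) := by
        rw [Complex.ofReal_mul]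
    _ = ((m.factorial : ℝ) : ℂ) := by rw [h]
    _ = (m.factorial : ℂ) := by norm_cast

lemma slater_norm (φ : Fin n → Fin d → ℂ)
    (hφ : ∀ i j, (∑ a, (starRingEnd ℂ) (φ i a) * φ j a) = if i = j then 1 else 0) :
    (∑ f : Fin n → Fin d, (starRingEnd ℂ) (slater φ f) * slater φ f) = 1 := by
  classical
  set c : ℂ := ((Real.sqrt n.factorial : ℂ))⁻¹ with hc
  have h1 : ∀ f : Fin n → Fin d, (starRingEnd ℂ) (slater φ f) * slater φ f
      = ∑ ρ : Perm (Fin n), ∑ π : Perm (Fin n),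
          (c * c) * ((sgnC ρ * ∏ i, (starRingEnd ℂ) (φ (ρ i) (f i))) *
            (sgnC π * ∏ i, φ (π i) (f i))) := by
    intro f
    rw [conj_slater φ f, slater_eq φ f, aSum_def]
    exact mul2_sum c _ _
  rw [Finset.sum_congr rfl fun f _ => h1 f]
  have h2 : (∑ f : Fin n → Fin d, ∑ ρ : Perm (Fin n), ∑ π : Perm (Fin n),
        (c * c) * ((sgnC ρ * ∏ i, (starRingEnd ℂ) (φ (ρ i) (f i))) *
          (sgnC π * ∏ i, φ (π i) (f i))))
      = ∑ ρ : Perm (Fin n), ∑ π : Perm (Fin n), ∑ f : Fin n → Fin d,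
        (c * c) * ((sgnC ρ * ∏ i, (starRingEnd ℂ) (φ (ρ i) (f i))) *
          (sgnC π * ∏ i, φ (π i) (f i))) :=
    calc (∑ f : Fin n → Fin d, ∑ ρ : Perm (Fin n), ∑ π : Perm (Fin n), ((c * c) *
          ((sgnC ρ * ∏ i, (starRingEnd ℂ) (φ (ρ i) (f i))) * (sgnC π * ∏ i, φ (π i) (f i)))))
        = ∑ ρ : Perm (Fin n), ∑ f : Fin n → Fin d, ∑ π : Perm (Fin n), ((c * c) *
          ((sgnC ρ * ∏ i, (starRingEnd ℂ) (φ (ρ i) (f i))) * (sgnC π * ∏ i, φ (π i) (f i)))) :=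
          Finset.sum_comm
      _ = ∑ ρ : Perm (Fin n), ∑ π : Perm (Fin n), ∑ f : Fin n → Fin d, ((c * c) *
          ((sgnC ρ * ∏ i, (starRingEnd ℂ) (φ (ρ i) (f i))) * (sgnC π * ∏ i, φ (π i) (f i)))) :=
          Finset.sum_congr rfl fun ρ _ => Finset.sum_comm
  rw [h2]
  have h3 : ∀ ρ π : Perm (Fin n),
      (∑ f : Fin n → Fin d, ((c * c) *
        ((sgnC ρ * ∏ i, (starRingEnd ℂ) (φ (ρ i) (f i))) * (sgnC π * ∏ i, φ (π i) (f i)))))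
      = ((c * c) * (sgnC ρ * sgnC π)) * (if (∀ i : Fin n, ρ i = π i) then 1 else 0) := by
    intro ρ π
    have h4 : ∀ f : Fin n → Fin d, ((c * c) *
        ((sgnC ρ * ∏ i, (starRingEnd ℂ) (φ (ρ i) (f i))) * (sgnC π * ∏ i, φ (π i) (f i))))
        = ((c * c) * (sgnC ρ * sgnC π)) * ∏ i, (starRingEnd ℂ) (φ (ρ i) (f i)) * φ (π i) (f i) := by
      intro f
      calc ((c * c) * ((sgnC ρ * ∏ i, (starRingEnd ℂ) (φ (ρ i) (f i))) *
              (sgnC π * ∏ i, φ (π i) (f i))))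
          = ((c * c) * (sgnC ρ * sgnC π)) *
              ((∏ i, (starRingEnd ℂ) (φ (ρ i) (f i))) * ∏ i, φ (π i) (f i)) := by ring
        _ = ((c * c) * (sgnC ρ * sgnC π)) *
              ∏ i, (starRingEnd ℂ) (φ (ρ i) (f i)) * φ (π i) (f i) := by
            rw [← Finset.prod_mul_distrib]
    rw [Finset.sum_congr rfl fun f _ => h4 f, ← Finset.mul_sum,
      orth_sum φ hφ (fun i => ρ i) (fun i => π i)]
  rw [Finset.sum_congr rfl fun ρ _ => Finset.sum_congr rfl fun π _ => h3 ρ π]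
  have h5 : ∀ ρ : Perm (Fin n), (∑ π : Perm (Fin n),
      ((c * c) * (sgnC ρ * sgnC π)) * (if (∀ i : Fin n, ρ i = π i) then 1 else 0)) = c * c := by
    intro ρ
    have h6 : ∀ π : Perm (Fin n),
        ((c * c) * (sgnC ρ * sgnC π)) * (if (∀ i : Fin n, ρ i = π i) then 1 else 0)
        = if π = ρ then ((c * c) * (sgnC ρ * sgnC π)) else 0 := by
      intro π
      have hiff : (∀ i : Fin n, ρ i = π i) ↔ π = ρ :=
        ⟨fun h => (Equiv.ext h).symm, fun h i => by rw [h]⟩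
      rw [if_congr hiff rfl rfl, mul_ite, mul_one, mul_zero]
    rw [Finset.sum_congr rfl fun π _ => h6 π,
      Finset.sum_ite_eq' Finset.univ ρ (fun π => (c * c) * (sgnC ρ * sgnC π))]
    simp only [Finset.mem_univ, if_true]
    rw [sgnC_mul_self, mul_one]
  rw [Finset.sum_congr rfl fun ρ _ => h5 ρ, Finset.sum_const, Finset.card_univ,
    Fintype.card_perm, Fintype.card_fin, nsmul_eq_mul, hc, sqrt_fact_sq]
  exact mul_inv_cancel₀ (fact_ne_zero' n)

/-- Hermiticity of `outer`. -/
lemma outer_isHermitian {α : Type*} (v : α → ℂ) : (outer v).IsHermitian := by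
  show (outer v)ᴴ = outer v
  ext x y
  rw [Matrix.conjTranspose_apply]
  show (starRingEnd ℂ) (v y * (starRingEnd ℂ) (v x)) = v x * (starRingEnd ℂ) (v y)
  rw [_root_.map_mul, Complex.conj_conj]
  ring

lemma outer_mulVec_self {α : Type*} [Fintype α] (v : α → ℂ)
    (hv : (∑ x, (starRingEnd ℂ) (v x) * v x) = 1) : (outer v) *ᵥ v = v := by
  funext x
  rw [Matrix.mulVec, dotProduct]
  calc (∑ yy, outer v x yy * v yy) = v x * ∑ yy, (starRingEnd ℂ) (v yy) * v yy := by
        rw [Finset.mul_sum]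
        exact Finset.sum_congr rfl fun yy _ => by
          show v x * (starRingEnd ℂ) (v yy) * v yy = _
          ring
    _ = v x := by rw [hv, mul_one]

lemma trace_outer_mul {α : Type*} [Fintype α] (v : α → ℂ) (X : Matrix α α ℂ) :
    (outer v * X).trace = dotProduct (star v) (X *ᵥ v) := by
  simp only [Matrix.trace, Matrix.diag, Matrix.mul_apply, dotProduct, Matrix.mulVec,
    Pi.star_apply]
  rw [Finset.sum_comm]
  refine Finset.sum_congr rfl fun yy _ => ?_
  rw [Finset.mul_sum]
  refine Finset.sum_congr rfl fun x _ => ?_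
  show v x * (starRingEnd ℂ) (v yy) * X yy x = star (v yy) * (X yy x * v x)
  rw [← starRingEnd_apply]
  ring

/-- Functional calculus on an eigenvector. -/
lemma hermFun_eigen {ι : Type*} [Fintype ι] [DecidableEq ι] (A : Matrix ι ι ℂ)
    (hA : A.IsHermitian) (F : ℝ → ℂ) (v : ι → ℂ)
    (hv : dotProduct (star v) v = 1) (lam : ℝ)
    (hAv : A *ᵥ v = ((lam : ℝ) : ℂ) • v) :
    dotProduct (star v) ((hermFun F A) *ᵥ v) = F lam := by
  classical
  have hHF : hermFun F A = (hA.eigenvectorUnitary : Matrix ι ι ℂ) *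
      Matrix.diagonal (fun i => F (hA.eigenvalues i)) *
        (star (hA.eigenvectorUnitary : Matrix ι ι ℂ)) := by
    unfold hermFun
    rw [dif_pos hA]
  set U : Matrix ι ι ℂ := (hA.eigenvectorUnitary : Matrix ι ι ℂ) with hU
  have hU1 : star U * U = 1 := Matrix.mem_unitaryGroup_iff'.mp (hA.eigenvectorUnitary).2
  have hU2 : U * star U = 1 := Matrix.mem_unitaryGroup_iff.mp (hA.eigenvectorUnitary).2
  set cvec : ι → ℂ := (star U) *ᵥ v with hcvec
  have hRC : ∀ x : ℝ, (RCLike.ofReal x : ℂ) = (x : ℂ) := fun x => rfl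
  have h3 : star U * A * U = Matrix.diagonal (fun i => ((hA.eigenvalues i : ℝ) : ℂ)) := by
    have h := hA.conjStarAlgAut_star_eigenvectorUnitary
    rw [Unitary.conjStarAlgAut_apply, Unitary.coe_star, star_star] at h
    exact h
  have h4 : Matrix.diagonal (fun i => ((hA.eigenvalues i : ℝ) : ℂ)) * star U = star U * A := by
    rw [← h3, Matrix.mul_assoc, Matrix.mul_assoc, hU2, Matrix.mul_one]
  have hdiag : (Matrix.diagonal (fun i => ((hA.eigenvalues i : ℝ) : ℂ))) *ᵥ cvec
      = ((lam : ℝ) : ℂ) • cvec := by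
    calc (Matrix.diagonal (fun i => ((hA.eigenvalues i : ℝ) : ℂ))) *ᵥ cvec
        = (Matrix.diagonal (fun i => ((hA.eigenvalues i : ℝ) : ℂ)) * star U) *ᵥ v := by
          rw [hcvec, Matrix.mulVec_mulVec]
      _ = (star U * A) *ᵥ v := by rw [h4]
      _ = (star U) *ᵥ (A *ᵥ v) := by rw [Matrix.mulVec_mulVec]
      _ = (star U) *ᵥ (((lam : ℝ) : ℂ) • v) := by rw [hAv]
      _ = ((lam : ℝ) : ℂ) • cvec := by rw [Matrix.mulVec_smul, hcvec]
  have heig : ∀ i, cvec i ≠ 0 → hA.eigenvalues i = lam := by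
    intro i hi
    have h5 := congrFun hdiag i
    rw [Matrix.mulVec_diagonal] at h5
    have h6 : ((hA.eigenvalues i : ℝ) : ℂ) = ((lam : ℝ) : ℂ) := by
      refine mul_right_cancel₀ hi ?_
      rw [h5]
      simp [smul_eq_mul]
    exact_mod_cast h6
  have hconj : ∀ i, (starRingEnd ℂ) (cvec i) = ∑ j, U j i * star (v j) := by
    intro i
    rw [hcvec]
    simp only [Matrix.mulVec, dotProduct, Matrix.star_apply, Pi.star_apply]
    rw [map_sum]
    refine Finset.sum_congr rfl fun j _ => ?_
    rw [_root_.map_mul, starRingEnd_apply, starRingEnd_apply, star_star]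
  have key : ∀ (D : ι → ℂ), dotProduct (star v) ((U * Matrix.diagonal D * star U) *ᵥ v)
      = ∑ i, (starRingEnd ℂ) (cvec i) * (D i * cvec i) := by
    intro D
    rw [← Matrix.mulVec_mulVec, ← Matrix.mulVec_mulVec]
    simp only [dotProduct, Matrix.mulVec, Pi.star_apply]
    calc (∑ j, star (v j) * ∑ i, U j i *
          dotProduct (fun i' => Matrix.diagonal D i i') cvec)
        = ∑ j, ∑ i, star (v j) * (U j i *
            dotProduct (fun i' => Matrix.diagonal D i i') cvec) := by
          exact Finset.sum_congr rfl fun j _ => by rw [Finset.mul_sum]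
      _ = ∑ i, ∑ j, star (v j) * (U j i *
            dotProduct (fun i' => Matrix.diagonal D i i') cvec) := Finset.sum_comm
      _ = ∑ i, (starRingEnd ℂ) (cvec i) * (D i * cvec i) := by
          refine Finset.sum_congr rfl fun i _ => ?_
          have hdd : dotProduct (fun i' => Matrix.diagonal D i i') cvec = D i * cvec i := by
            rw [show (fun i' => Matrix.diagonal D i i') = fun i' => if i = i' then D i else 0 from
              funext fun i' => by rw [Matrix.diagonal_apply]]
            rw [dotProduct]
            rw [Finset.sum_congr rfl fun i' _ => by rw [ite_mul, zero_mul],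
              Finset.sum_ite_eq Finset.univ i (fun i' => D i * cvec i')]
            simp
          rw [hdd, hconj i, Finset.sum_mul]
          exact Finset.sum_congr rfl fun j _ => by ring
  rw [hHF, key]
  have h7 : ∀ i, (starRingEnd ℂ) (cvec i) * (F (hA.eigenvalues i) * cvec i)
      = F lam * ((starRingEnd ℂ) (cvec i) * cvec i) := by
    intro i
    by_cases hi : cvec i = 0
    · rw [hi]
      ring
    · rw [heig i hi]
      ring
  rw [Finset.sum_congr rfl fun i _ => h7 i, ← Finset.mul_sum]
  have h9 : (∑ i, (starRingEnd ℂ) (cvec i) * cvec i) = 1 := by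
    have h10 : (∑ i, (starRingEnd ℂ) (cvec i) * cvec i)
        = dotProduct (star v) ((U * Matrix.diagonal (fun _ : ι => (1:ℂ)) * star U) *ᵥ v) := by
      rw [key (fun _ => (1 : ℂ))]
      exact Finset.sum_congr rfl fun i _ => by ring
    rw [h10, Matrix.diagonal_one, Matrix.mul_one, hU2, Matrix.one_mulVec, hv]
  rw [h9, mul_one]

end ACAux
end Aux6
noncomputable section Aux7
open Equiv
namespace ACAux

variable {d k n : ℕ}

lemma antiProj_isHermitian (d m : ℕ) : (antiProj d m).IsHermitian := by
  show (antiProj d m)ᴴ = antiProj d m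
  ext a b
  rw [Matrix.conjTranspose_apply, ← starRingEnd_apply, antiProj_apply, antiProj_apply,
    _root_.map_mul, map_inv₀, map_natCast, map_sum]
  congr 1
  have h1 : ∀ π : Perm (Fin m), (starRingEnd ℂ) (sgnC π * (if a = b ∘ ⇑π then (1:ℂ) else 0))
      = sgnC π * (if a = b ∘ ⇑π then (1:ℂ) else 0) := by
    intro π
    rw [_root_.map_mul, conj_sgnC, apply_ite (starRingEnd ℂ), _root_.map_one, _root_.map_zero]
  rw [Finset.sum_congr rfl fun π _ => h1 π]
  refine Fintype.sum_equiv (Equiv.inv (Perm (Fin m))) _ _ ?_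
  intro π
  show sgnC π * (if a = b ∘ ⇑π then (1:ℂ) else 0) = sgnC π⁻¹ * (if b = a ∘ ⇑(π⁻¹) then 1 else 0)
  rw [sgnC_inv, if_congr (comp_perm_eq_iff π b a) rfl rfl]

lemma ptl_isHermitian (hkn : k ≤ n) (φ : Fin n → Fin d → ℂ) :
    (ptraceLast hkn (outer (slater φ))).IsHermitian := by
  show _ᴴ = _
  ext a b
  rw [Matrix.conjTranspose_apply, ← starRingEnd_apply, ptl_apply, ptl_apply, map_sum]
  refine Finset.sum_congr rfl fun z _ => ?_
  rw [_root_.map_mul, Complex.conj_conj]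
  ring

lemma extendId_isHermitian (hkn : k ≤ n) (N : Matrix (Fin k → Fin d) (Fin k → Fin d) ℂ)
    (hN : N.IsHermitian) : (extendId hkn N).IsHermitian := by
  show _ᴴ = _
  ext f g
  rw [Matrix.conjTranspose_apply]
  show (starRingEnd ℂ) ((if ∀ i : Fin n, k ≤ (i : ℕ) → g i = f i then (1:ℂ) else 0) *
      N (fun i => g (Fin.castLE hkn i)) (fun i => f (Fin.castLE hkn i)))
    = (if ∀ i : Fin n, k ≤ (i : ℕ) → f i = g i then (1:ℂ) else 0) *
      N (fun i => f (Fin.castLE hkn i)) (fun i => g (Fin.castLE hkn i))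
  rw [_root_.map_mul]
  congr 1
  · rw [apply_ite (starRingEnd ℂ), _root_.map_one, _root_.map_zero]
    refine if_congr ?_ rfl rfl
    constructor
    · intro h i hi
      exact (h i hi).symm
    · intro h i hi
      exact (h i hi).symm
  · rw [starRingEnd_apply]
    exact hN.apply _ _

lemma sigma_isHermitian (hkn : k ≤ n) (φ : Fin n → Fin d → ℂ) :
    (antiClone d hkn (antiPTrace d hkn (outer (slater φ)))).IsHermitian := by
  rw [antiPTrace_outer hkn φ, antiClone_ptl hkn φ]
  show _ᴴ = _
  rw [Matrix.conjTranspose_smul]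
  have hstar : star ((d.choose k : ℂ) / (d.choose n : ℂ))
      = ((d.choose k : ℂ) / (d.choose n : ℂ)) := by
    rw [star_div₀, star_natCast, star_natCast]
  rw [hstar]
  congr 1
  rw [Matrix.conjTranspose_mul, Matrix.conjTranspose_mul]
  rw [(antiProj_isHermitian d n).eq, (extendId_isHermitian hkn _ (ptl_isHermitian hkn φ)).eq]
  rw [Matrix.mul_assoc]

lemma sigma_mulVec (hkn : k ≤ n) (φ : Fin n → Fin d → ℂ)
    (hφ : ∀ i j, (∑ a, (starRingEnd ℂ) (φ i a) * φ j a) = if i = j then 1 else 0) :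
    (antiClone d hkn (antiPTrace d hkn (outer (slater φ)))) *ᵥ (slater φ)
      = (((d.choose k : ℂ) / (d.choose n : ℂ)) *
          (((k.factorial : ℂ) * ((n - k).factorial : ℂ)) / (n.factorial : ℂ))) • slater φ := by
  rw [antiPTrace_outer hkn φ, antiClone_ptl hkn φ, Matrix.smul_mulVec,
    ← Matrix.mulVec_mulVec, antiProj_mulVec (slater φ) (fun π a => slater_perm φ π a),
    ← Matrix.mulVec_mulVec, core_mulVec hkn φ hφ, Matrix.mulVec_smul,
    antiProj_mulVec (slater φ) (fun π a => slater_perm φ π a), smul_smul]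

lemma choose_chain (hkn : k ≤ n) (hnd : n ≤ d) :
    d.choose k * (k.factorial * (n - k).factorial) * ((d - k).choose (n - k))
      = d.choose n * n.factorial := by
  have h1 : d.choose n * n.choose k = d.choose k * (d - k).choose (n - k) :=
    Nat.choose_mul hkn
  have h2 : n.choose k * (k.factorial * (n - k).factorial) = n.factorial := by
    have h := Nat.choose_mul_factorial_mul_factorial hkn
    calc n.choose k * (k.factorial * (n - k).factorial)
        = n.choose k * k.factorial * (n - k).factorial := by ring
      _ = n.factorial := h
  calc d.choose k * (k.factorial * (n - k).factorial) * ((d - k).choose (n - k))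
      = (d.choose k * (d - k).choose (n - k)) * (k.factorial * (n - k).factorial) := by ring
    _ = (d.choose n * n.choose k) * (k.factorial * (n - k).factorial) := by rw [← h1]
    _ = d.choose n * (n.choose k * (k.factorial * (n - k).factorial)) := by ring
    _ = d.choose n * n.factorial := by rw [h2]

lemma choose_symm_dk (hkn : k ≤ n) (hnd : n ≤ d) :
    (d - k).choose (d - n) = (d - k).choose (n - k) := by
  have h4 : (d - k) - (n - k) = d - n := by omega
  rw [← h4, Nat.choose_symm (by omega : n - k ≤ d - k)]

lemma lam_eq (hkn : k ≤ n) (hnd : n ≤ d) :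
    ((d.choose k : ℂ) / (d.choose n : ℂ)) *
        (((k.factorial : ℂ) * ((n - k).factorial : ℂ)) / (n.factorial : ℂ))
      = (((((d - k).choose (d - n) : ℕ) : ℝ)⁻¹ : ℝ) : ℂ) := by
  have hR : (((((d - k).choose (d - n) : ℕ) : ℝ)⁻¹ : ℝ) : ℂ)
      = ((((d - k).choose (n - k) : ℕ) : ℂ))⁻¹ := by
    rw [choose_symm_dk hkn hnd]
    push_cast
    ring
  rw [hR]
  have hcn : ((d.choose n : ℕ) : ℂ) ≠ 0 :=
    Nat.cast_ne_zero.mpr (Nat.choose_pos hnd).ne'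
  have hC : (((d - k).choose (n - k) : ℕ) : ℂ) ≠ 0 :=
    Nat.cast_ne_zero.mpr (Nat.choose_pos (by omega : n - k ≤ d - k)).ne'
  have key : ((d.choose k : ℕ) : ℂ) * (((k.factorial : ℕ) : ℂ) * (((n - k).factorial : ℕ) : ℂ))
      * ((((d - k).choose (n - k) : ℕ)) : ℂ) = ((d.choose n : ℕ) : ℂ) * ((n.factorial : ℕ) : ℂ) := by
    exact_mod_cast congrArg (fun x : ℕ => (x : ℂ)) (choose_chain hkn hnd)
  rw [div_mul_div_comm, inv_eq_one_div,
    div_eq_div_iff (mul_ne_zero hcn (fact_ne_zero' n)) hC]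
  linear_combination key

end ACAux
end Aux7
open ACAux in
/-- Relative entropy bound for the antisymmetric cloning machine recovering a Slater
determinant from the loss of `n−k` fermionic particles. -/
theorem antisym_cloning_relEnt_bound
    (d k n : ℕ) (hk : 1 ≤ k) (hkn : k ≤ n) (hnd : n ≤ d)
    (φ : Fin n → (Fin d → ℂ))
    (hφ : ∀ i j, (∑ a, (starRingEnd ℂ) (φ i a) * φ j a) = if i = j then 1 else 0) :
    relEnt (outer (slater φ))
        (antiClone d hkn (antiPTrace d hkn (outer (slater φ)))) ≤
      Real.log (((d - k).choose (d - n) : ℝ)) ∧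
    Real.log (((d - k).choose (d - n) : ℝ)) =
      -Real.log ((d.choose k : ℝ) / ((n.choose k : ℝ) * (d.choose n : ℝ))) := by
  classical
  have hvnorm : (∑ f : Fin n → Fin d, (starRingEnd ℂ) (slater φ f) * slater φ f) = 1 :=
    slater_norm φ hφ
  have hdot : dotProduct (star (slater φ)) (slater φ) = 1 := by
    rw [dotProduct]
    calc (∑ f, (star (slater φ)) f * slater φ f)
        = ∑ f, (starRingEnd ℂ) (slater φ f) * slater φ f := by
          refine Finset.sum_congr rfl fun f _ => ?_
          rw [Pi.star_apply, starRingEnd_apply]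
      _ = 1 := hvnorm
  constructor
  · -- the relative entropy is exactly log C(d-k, d-n)
    have hρH : (outer (slater φ)).IsHermitian := outer_isHermitian (slater φ)
    have hρv : (outer (slater φ)) *ᵥ (slater φ) = (((1 : ℝ) : ℂ)) • slater φ := by
      rw [outer_mulVec_self (slater φ) hvnorm]
      norm_num
    set lam : ℝ := ((((d - k).choose (d - n) : ℕ) : ℝ))⁻¹ with hlam
    have hσv : (antiClone d hkn (antiPTrace d hkn (outer (slater φ)))) *ᵥ (slater φ)
        = ((lam : ℝ) : ℂ) • slater φ := by
      rw [sigma_mulVec hkn φ hφ, lam_eq hkn hnd]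
    have hσH := sigma_isHermitian hkn φ
    have hlog1 : dotProduct (star (slater φ))
        ((matLog (outer (slater φ))) *ᵥ (slater φ)) = ((Real.log 1 : ℝ) : ℂ) :=
      hermFun_eigen (outer (slater φ)) hρH (fun x => ((Real.log x : ℝ) : ℂ)) (slater φ) hdot 1 hρv
    have hlog2 : dotProduct (star (slater φ))
        ((matLog (antiClone d hkn (antiPTrace d hkn (outer (slater φ))))) *ᵥ (slater φ))
        = ((Real.log lam : ℝ) : ℂ) :=
      hermFun_eigen _ hσH (fun x => ((Real.log x : ℝ) : ℂ)) (slater φ) hdot lam hσv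
    have hRE : relEnt (outer (slater φ))
        (antiClone d hkn (antiPTrace d hkn (outer (slater φ)))) = Real.log 1 - Real.log lam := by
      rw [relEnt, Matrix.mul_sub, Matrix.trace_sub, trace_outer_mul, trace_outer_mul,
        hlog1, hlog2, ← Complex.ofReal_sub, Complex.ofReal_re]
    rw [hRE, Real.log_one, zero_sub, hlam, Real.log_inv, neg_neg]
  · -- the arithmetic identity
    have h3 : (d - k).choose (d - n) = (d - k).choose (n - k) := choose_symm_dk hkn hnd
    have hnk0 : (0 : ℝ) < ((n.choose k : ℕ) : ℝ) := by
      exact_mod_cast Nat.choose_pos hkn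
    have hdn0 : (0 : ℝ) < ((d.choose n : ℕ) : ℝ) := by
      exact_mod_cast Nat.choose_pos hnd
    have hC0 : (0 : ℝ) < (((d - k).choose (n - k) : ℕ) : ℝ) := by
      exact_mod_cast Nat.choose_pos (by omega : n - k ≤ d - k)
    have hfrac : ((d.choose k : ℝ)) / ((n.choose k : ℝ) * (d.choose n : ℝ))
        = ((((d - k).choose (d - n) : ℕ) : ℝ))⁻¹ := by
      rw [h3, inv_eq_one_div,
        div_eq_div_iff (by positivity : ((n.choose k : ℝ) * (d.choose n : ℝ)) ≠ 0) hC0.ne']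
      have key : d.choose k * ((d - k).choose (n - k)) = n.choose k * d.choose n := by
        have h1 : d.choose n * n.choose k = d.choose k * (d - k).choose (n - k) :=
          Nat.choose_mul hkn
        rw [← h1]
        exact Nat.mul_comm _ _
      rw [one_mul]
      exact_mod_cast key
    rw [hfrac, Real.log_inv, neg_neg]
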